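/- Let A ⊆ B be an integral extension of commutative rings which is R-subintegral. Then the map sending a real prime ideal q of B to q ∩ A is a homeomorphism from the set of real prime ideals of B onto the set of real prime ideals of A, both equipped with the subspace topology induced by the Zariski topology on the prime spectrum. -/

import Mathlib

/-- An ideal `I` of a commutative ring is *real* if whenever a finite sum of squares
of elements lies in `I`, then each of these elements lies in `I`. -/
def Ideal.IsRealIdeal {A : Type*} [CommRing A] (I : Ideal A) : Prop :=
  ∀ (n : ℕ) (a : Fin n → A), (∑ i, a i ^ 2) ∈ I → ∀ i, a i ∈ I

/-- An integral extension `φ : A → B` is *R-subintegral* if for every real prime ideal `p`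
of `A` there is exactly one prime ideal `q` of `B` lying over `p`, this `q` is a real ideal,
and the induced map of residue fields `κ(p) → κ(q)` is an isomorphism.  (The residue-field
isomorphism is expressed by its surjectivity: every `b : B` is congruent mod `q` to a
fraction `a/s` with `a s : A`, `s ∉ p`; injectivity is automatic for fields.) -/
def RSubintegral {A B : Type*} [CommRing A] [CommRing B] (φ : A →+* B) : Prop :=
  ∀ p : Ideal A, p.IsPrime → p.IsRealIdeal →
    (∃! q : Ideal B, q.IsPrime ∧ q.comap φ = p) ∧
    ∀ q : Ideal B, q.IsPrime → q.comap φ = p →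
      q.IsRealIdeal ∧ ∀ b : B, ∃ a s : A, s ∉ p ∧ φ s * b - φ a ∈ q

/-- The contraction of a real ideal is real. -/
lemma Ideal.IsRealIdeal.comap' {A B : Type*} [CommRing A] [CommRing B] (φ : A →+* B)
    {q : Ideal B} (hq : q.IsRealIdeal) : (q.comap φ).IsRealIdeal := by
  intro n a h i
  have : (∑ i, (φ (a i)) ^ 2) ∈ q := by
    have := h
    simp only [Ideal.mem_comap, map_sum, map_pow] at this
    exact this
  exact hq n (fun i => φ (a i)) this i

/-- If `A ⊆ B` is an integral R-subintegral extension, then `q ↦ q ∩ A` is a homeomorphism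
from the set of real prime ideals of `B` onto the set of real prime ideals of `A`, both with
the subspace topology induced by the Zariski topology on the prime spectrum. -/
theorem rsubintegral_homeomorph_realSpec {A B : Type*} [CommRing A] [CommRing B]
    (φ : A →+* B) (hinj : Function.Injective φ) (hint : φ.IsIntegral)
    (hR : RSubintegral φ) :
    ∃ h : {q : PrimeSpectrum B // q.asIdeal.IsRealIdeal} ≃ₜ
          {p : PrimeSpectrum A // p.asIdeal.IsRealIdeal},
      ∀ q : {q : PrimeSpectrum B // q.asIdeal.IsRealIdeal},
        (h q : PrimeSpectrum A) = PrimeSpectrum.comap φ q.1 := by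
  classical
  set f : {q : PrimeSpectrum B // q.asIdeal.IsRealIdeal} →
      {p : PrimeSpectrum A // p.asIdeal.IsRealIdeal} :=
    fun q => ⟨PrimeSpectrum.comap φ q.1, q.2.comap' φ⟩ with hf
  have hbij : Function.Bijective f := by
    constructor
    · rintro q₁ q₂ hq
      have hp : (q₁.1.asIdeal.comap φ).IsRealIdeal := q₁.2.comap' φ
      obtain ⟨q, -, huniq⟩ := (hR (q₁.1.asIdeal.comap φ) inferInstance hp).1
      have h1 : q₁.1.asIdeal = q := huniq _ ⟨q₁.1.2, rfl⟩
      have hcomap : q₂.1.asIdeal.comap φ = q₁.1.asIdeal.comap φ := by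
        have := congrArg (fun p => (Subtype.val p).asIdeal) hq
        exact this.symm
      have h2 : q₂.1.asIdeal = q := huniq _ ⟨q₂.1.2, hcomap⟩
      exact Subtype.ext (PrimeSpectrum.ext (h1.trans h2.symm))
    · rintro ⟨p, hpreal⟩
      obtain ⟨q, ⟨hqprime, hqcomap⟩, -⟩ := (hR p.asIdeal p.2 hpreal).1
      have hqreal := ((hR p.asIdeal p.2 hpreal).2 q hqprime hqcomap).1
      exact ⟨⟨⟨q, hqprime⟩, hqreal⟩, Subtype.ext (PrimeSpectrum.ext hqcomap)⟩
  set e := Equiv.ofBijective f hbij with he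
  have contf : Continuous f :=
    Continuous.subtype_mk ((PrimeSpectrum.continuous_comap φ).comp continuous_subtype_val) _
  have contsymm : Continuous e.symm := by
    rw [continuous_iff_isClosed]
    intro C hC
    have himg : e.symm ⁻¹' C = f '' C := (Equiv.image_eq_preimage_symm e C).symm
    rw [himg]
    obtain ⟨C', hC', rfl⟩ := isClosed_induced_iff.mp hC
    have hkey : f '' (Subtype.val ⁻¹' C') =
        Subtype.val ⁻¹' (PrimeSpectrum.comap φ '' C') := by
      ext p
      constructor
      · rintro ⟨q, hqC, rfl⟩
        exact ⟨q.1, hqC, rfl⟩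
      · rintro ⟨q', hq'C, hq'p⟩
        have hq'comap : q'.asIdeal.comap φ = p.1.asIdeal := by
          rw [← hq'p]; rfl
        have hq'real : q'.asIdeal.IsRealIdeal :=
          ((hR p.1.asIdeal p.1.2 p.2).2 q'.asIdeal q'.2 hq'comap).1
        refine ⟨⟨q', hq'real⟩, hq'C, Subtype.ext (PrimeSpectrum.ext ?_)⟩
        exact hq'comap
    rw [hkey]
    exact (PrimeSpectrum.isClosedMap_comap_of_isIntegral φ hint C' hC').preimage
      continuous_subtype_val
  exact ⟨⟨e, contf, contsymm⟩, fun q => rfl⟩
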